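/- Let A_ℓ be symmetric positive definite, P a full-rank prolongation, A_{ℓ-1} = PᵀA_ℓP, and M_ℓ symmetric positive definite. Suppose the approximation-property estimate ‖(I − P A_{ℓ-1}^{-1} Pᵀ A_ℓ) u‖_{A_ℓ}² ≤ c ‖u‖_{A_ℓ M_ℓ^{-1} A_ℓ}² holds for all u, where ‖u‖_{A M^{-1} A}² = uᵀ A M^{-1} A u. Then ‖(I − P A_{ℓ-1}^{-1} Pᵀ A_ℓ) u‖_{M_ℓ}² ≤ c ‖u‖_{A_ℓ}² for all u, i.e., the estimate 'flips' from an (A, A M^{-1} A)-bound to an (M, A)-bound. -/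

import Mathlib

open Matrix

private lemma mulVec_dot {N : ℕ} (B : Matrix (Fin N) (Fin N) ℝ)
    (x y : Fin N → ℝ) : (B *ᵥ x) ⬝ᵥ y = x ⬝ᵥ (Bᵀ *ᵥ y) := by
  rw [Matrix.dotProduct_mulVec, Matrix.vecMul_transpose]

/-- Flipping the approximation-property estimate: with
`E = I − P A_c⁻¹ Pᵀ A` the coarse-grid correction (where `A_c = PᵀAP` and `P`
has full column rank), an estimate `‖E u‖_A² ≤ c ‖u‖_{A M⁻¹ A}²` for all `u`
implies `‖E u‖_M² ≤ c ‖u‖_A²` for all `u`. -/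
theorem approximation_property_flip {N Nc : ℕ}
    (A M : Matrix (Fin N) (Fin N) ℝ) (hA : A.PosDef) (hM : M.PosDef)
    (P : Matrix (Fin N) (Fin Nc) ℝ) (hP : Function.Injective P.mulVec)
    (c : ℝ) (hc : 0 ≤ c)
    (hyp : ∀ u : Fin N → ℝ,
      ((1 - P * (Pᵀ * A * P)⁻¹ * Pᵀ * A).mulVec u) ⬝ᵥ
          A.mulVec ((1 - P * (Pᵀ * A * P)⁻¹ * Pᵀ * A).mulVec u)
        ≤ c * (u ⬝ᵥ (A * M⁻¹ * A).mulVec u)) :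
    ∀ u : Fin N → ℝ,
      ((1 - P * (Pᵀ * A * P)⁻¹ * Pᵀ * A).mulVec u) ⬝ᵥ
          M.mulVec ((1 - P * (Pᵀ * A * P)⁻¹ * Pᵀ * A).mulVec u)
        ≤ c * (u ⬝ᵥ A.mulVec u) := by
  intro u
  have hAT : Aᵀ = A := hA.isHermitian
  have hMT : Mᵀ = M := hM.isHermitian
  have hAdet : IsUnit A.det := isUnit_iff_ne_zero.mpr (ne_of_gt hA.det_pos)
  have hMdet : IsUnit M.det := isUnit_iff_ne_zero.mpr (ne_of_gt hM.det_pos)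
  have hAAinv : A * A⁻¹ = 1 := Matrix.mul_nonsing_inv A hAdet
  have hAinvA : A⁻¹ * A = 1 := Matrix.nonsing_inv_mul A hAdet
  have hMinvM : M⁻¹ * M = 1 := Matrix.nonsing_inv_mul M hMdet
  set E : Matrix (Fin N) (Fin N) ℝ := 1 - P * (Pᵀ * A * P)⁻¹ * Pᵀ * A with hE
  have hAinvT : (A⁻¹)ᵀ = A⁻¹ := by rw [Matrix.transpose_nonsing_inv, hAT]
  have hAcT : (Pᵀ * A * P)ᵀ = Pᵀ * A * P := by
    simp [Matrix.transpose_mul, hAT, Matrix.mul_assoc]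
  have hAcinvT : ((Pᵀ * A * P)⁻¹)ᵀ = (Pᵀ * A * P)⁻¹ := by
    rw [Matrix.transpose_nonsing_inv, hAcT]
  -- E is A-selfadjoint: Eᵀ A = A E
  have hEA : Eᵀ * A = A * E := by
    rw [hE]
    simp only [Matrix.transpose_sub, Matrix.transpose_one, Matrix.transpose_mul, hAT,
      Matrix.transpose_transpose, hAcinvT, Matrix.sub_mul, Matrix.mul_sub,
      Matrix.one_mul, Matrix.mul_one]
    congr 1
    simp only [Matrix.mul_assoc]
  -- repeated cancellation helpers
  have hAAinv' : ∀ X : Matrix (Fin N) (Fin N) ℝ, A * (A⁻¹ * X) = X := fun X => by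
    rw [← Matrix.mul_assoc, hAAinv, Matrix.one_mul]
  set w : Fin N → ℝ := E *ᵥ u with hw
  set v : Fin N → ℝ := (A⁻¹ * M) *ᵥ w with hv
  set g : Fin N → ℝ := E *ᵥ v with hg
  set t : ℝ := w ⬝ᵥ M *ᵥ w with ht
  -- claim 1: v ⬝ᵥ (A M⁻¹ A) v = t
  have key1 : (A⁻¹ * M)ᵀ * (A * M⁻¹ * A) * (A⁻¹ * M) = M := by
    simp only [Matrix.transpose_mul, hAinvT, hMT, Matrix.mul_assoc, hAAinv', hMinvM,
      hAinvA, Matrix.mul_one]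
  have claim1 : v ⬝ᵥ (A * M⁻¹ * A) *ᵥ v = t := by
    rw [ht, hv, mulVec_dot, Matrix.mulVec_mulVec, Matrix.mulVec_mulVec, key1]
  -- claim 2 (hypothesis applied to v): ‖E v‖_A² ≤ c t
  have claim2 : g ⬝ᵥ A *ᵥ g ≤ c * t := by
    have := hyp v
    rwa [claim1, ← hg] at this
  -- claim 3: u ⬝ᵥ A (E v) = t
  have hAM : A * (A⁻¹ * M) = M := hAAinv' M
  have claim3 : u ⬝ᵥ A *ᵥ g = t := by
    calc u ⬝ᵥ A *ᵥ g = u ⬝ᵥ (A * E) *ᵥ v := by rw [hg, Matrix.mulVec_mulVec]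
      _ = (E *ᵥ u) ⬝ᵥ A *ᵥ v := by
          rw [← hEA, ← Matrix.mulVec_mulVec, ← mulVec_dot]
      _ = w ⬝ᵥ (A * (A⁻¹ * M)) *ᵥ w := by rw [← hw, hv, Matrix.mulVec_mulVec]
      _ = t := by rw [hAM, ht]
  -- nonnegativity facts
  have htnn : 0 ≤ t := by
    have := hM.posSemidef.dotProduct_mulVec_nonneg w
    simpa [ht] using this
  have hAnn : ∀ x : Fin N → ℝ, 0 ≤ x ⬝ᵥ A *ᵥ x := by
    intro x
    have := hA.posSemidef.dotProduct_mulVec_nonneg x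
    simpa using this
  rcases eq_or_lt_of_le hc with hc0 | hcpos
  · -- c = 0 : hypothesis forces A (E u) = 0
    have h0 : w ⬝ᵥ A *ᵥ w ≤ 0 := by
      have := hyp u
      rw [← hc0] at this
      simpa [← hw] using this
    have hw0 : A *ᵥ w = 0 := by
      have hz : (star w) ⬝ᵥ A *ᵥ w = 0 := by
        have := hAnn w
        simp only [star_trivial]
        linarith
      exact (hA.posSemidef.dotProduct_mulVec_zero_iff w).mp hz
    have hwz : w = 0 := by
      have := congrArg (fun y => A⁻¹ *ᵥ y) hw0
      simpa [Matrix.mulVec_mulVec, hAinvA] using this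
    rw [ht, hwz]
    simp [← hc0]
  · -- c > 0 : quadratic / Cauchy-Schwarz argument
    have hsym : u ⬝ᵥ A *ᵥ g = g ⬝ᵥ A *ᵥ u := by
      rw [dotProduct_comm, mulVec_dot, hAT]
    have hquad : 0 ≤ (c • u - g) ⬝ᵥ A *ᵥ (c • u - g) := hAnn _
    have hexp : (c • u - g) ⬝ᵥ A *ᵥ (c • u - g)
        = c * c * (u ⬝ᵥ A *ᵥ u) - c * (u ⬝ᵥ A *ᵥ g) - c * (g ⬝ᵥ A *ᵥ u)
          + g ⬝ᵥ A *ᵥ g := by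
      simp [Matrix.mulVec_sub, Matrix.mulVec_smul, sub_dotProduct,
        dotProduct_sub, smul_dotProduct, dotProduct_smul,
        smul_eq_mul]
      ring
    rw [hexp] at hquad
    nlinarith [claim2, claim3, hsym, hquad, hcpos]
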